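/- Let X be a cocompact proper CAT(0) space and fix R ≥ 0, λ > 0, and set K = (2R+1)/√(2 − 2cos λ). If Σ ⊂ ∂X is an (R,λ)-wide set with center x, then there is a subset of the sphere S_K(x) = {p ∈ X : d(p,x) = K}, of the same cardinality as Σ, in which every pair of distinct points has distance at least 1. -/

import Mathlib

open Real Filter

def IsUnitSpeedOn {X : Type*} [MetricSpace X] (γ : ℝ → X) (s : Set ℝ) : Prop :=
  ∀ a ∈ s, ∀ b ∈ s, dist (γ a) (γ b) = |a - b|

def GeodesicMetricSpace (X : Type*) [MetricSpace X] : Prop :=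
  ∀ x y : X, ∃ γ : ℝ → X, γ 0 = x ∧ γ (dist x y) = y ∧
    IsUnitSpeedOn γ (Set.Icc 0 (dist x y))

def CAT0Space (X : Type*) [MetricSpace X] : Prop :=
  GeodesicMetricSpace X ∧ ∀ x y m z : X,
    dist x m = dist x y / 2 → dist y m = dist x y / 2 →
    dist z m ^ 2 ≤ dist z x ^ 2 / 2 + dist z y ^ 2 / 2 - dist x y ^ 2 / 4

/-- The Euclidean comparison angle at `x` of the triple `(x, y, z)`. -/
noncomputable def compAngle {X : Type*} [MetricSpace X] (x y z : X) : ℝ :=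
  Real.arccos ((dist x y ^ 2 + dist x z ^ 2 - dist y z ^ 2) / (2 * dist x y * dist x z))

section Aux
variable {X : Type*} [MetricSpace X]

/-- Midpoints of two geodesics from a common vertex. -/
lemma midpoint_dist_le (hX : CAT0Space X) {a b c mb mc : X}
    (h1 : dist a mb = dist a b / 2) (h2 : dist b mb = dist a b / 2)
    (h3 : dist a mc = dist a c / 2) (h4 : dist c mc = dist a c / 2) :
    dist mb mc ≤ dist b c / 2 := by
  have H1 := hX.2 a b mb mc h1 h2
  have H2 := hX.2 a c mc b h3 h4
  rw [dist_comm mc a, h3, dist_comm mc b] at H1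
  rw [dist_comm b a] at H2
  rw [dist_comm mb mc]
  nlinarith [dist_nonneg (x := mc) (y := mb), dist_nonneg (x := b) (y := c), H1, H2]

/-- Midpoint convexity of the distance between geodesics. -/
lemma midpoint_convexity (hX : CAT0Space X) {a b a' b' m m' : X}
    (h1 : dist a m = dist a b / 2) (h2 : dist b m = dist a b / 2)
    (h3 : dist a' m' = dist a' b' / 2) (h4 : dist b' m' = dist a' b' / 2) :
    dist m m' ≤ (dist a a' + dist b b') / 2 := by
  obtain ⟨γ, hγ0, hγ1, hγu⟩ := hX.1 a b'
  set d := dist a b' with hd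
  have hdnn : (0:ℝ) ≤ d := dist_nonneg
  set n := γ (d / 2) with hn
  have hmem0 : (0:ℝ) ∈ Set.Icc 0 d := ⟨le_refl _, hdnn⟩
  have hmemd : d ∈ Set.Icc 0 d := ⟨hdnn, le_refl _⟩
  have hmemh : d / 2 ∈ Set.Icc 0 d := ⟨by linarith, by linarith⟩
  have hn1 : dist a n = d / 2 := by
    rw [← hγ0, hn, hγu 0 hmem0 (d/2) hmemh]
    rw [abs_of_nonpos (by linarith)]; ring
  have hn2 : dist b' n = d / 2 := by
    rw [← hγ1, hn, hγu d hmemd (d/2) hmemh]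
    rw [abs_of_nonneg (by linarith)]; ring
  have key1 : dist m n ≤ dist b b' / 2 :=
    midpoint_dist_le hX h1 h2 hn1 hn2
  have key2 : dist n m' ≤ dist a a' / 2 := by
    have p1 : dist b' n = dist b' a / 2 := by rw [hn2, dist_comm b' a]
    have p2 : dist a n = dist b' a / 2 := by rw [hn1, dist_comm b' a]
    have p3 : dist b' m' = dist b' a' / 2 := by rw [h4, dist_comm a' b']
    have p4 : dist a' m' = dist b' a' / 2 := by rw [h3, dist_comm a' b']
    exact midpoint_dist_le hX p1 p2 p3 p4
  calc dist m m' ≤ dist m n + dist n m' := dist_triangle _ _ _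
    _ ≤ dist b b' / 2 + dist a a' / 2 := add_le_add key1 key2
    _ = (dist a a' + dist b b') / 2 := by ring

/-- Midpoint convexity for distances along two unit-speed rays. -/
lemma ray_dist_midpoint (hX : CAT0Space X) {γ δ : ℝ → X}
    (hγ : IsUnitSpeedOn γ (Set.Ici 0)) (hδ : IsUnitSpeedOn δ (Set.Ici 0))
    {s t : ℝ} (hs : 0 ≤ s) (ht : 0 ≤ t) :
    dist (γ ((s + t)/2)) (δ ((s + t)/2)) ≤ (dist (γ s) (δ s) + dist (γ t) (δ t)) / 2 := by
  have hm : (0:ℝ) ≤ (s + t)/2 := by linarith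
  have e : ∀ (ε : ℝ → X), IsUnitSpeedOn ε (Set.Ici 0) →
      dist (ε s) (ε ((s+t)/2)) = dist (ε s) (ε t) / 2 ∧
      dist (ε t) (ε ((s+t)/2)) = dist (ε s) (ε t) / 2 := by
    intro ε hε
    rw [hε s hs ((s+t)/2) hm, hε t ht ((s+t)/2) hm, hε s hs t ht]
    constructor
    · rcases le_total s t with h | h
      · rw [abs_of_nonpos (by linarith : s - (s+t)/2 ≤ 0),
          abs_of_nonpos (by linarith : s - t ≤ 0)]; ring
      · rw [abs_of_nonneg (by linarith : 0 ≤ s - (s+t)/2),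
          abs_of_nonneg (by linarith : 0 ≤ s - t)]; ring
    · rcases le_total s t with h | h
      · rw [abs_of_nonneg (by linarith : 0 ≤ t - (s+t)/2),
          abs_of_nonpos (by linarith : s - t ≤ 0)]; ring
      · rw [abs_of_nonpos (by linarith : t - (s+t)/2 ≤ 0),
          abs_of_nonneg (by linarith : 0 ≤ s - t)]; ring
  obtain ⟨e1, e2⟩ := e γ hγ
  obtain ⟨e3, e4⟩ := e δ hδ
  exact midpoint_convexity hX e1 e2 e3 e4

end Aux

/-- A continuous midpoint-convex function on `[0,T]` lies below its chord. -/
lemma midpoint_convex_chord {f : ℝ → ℝ} {T : ℝ} (hT : 0 < T)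
    (hcont : ContinuousOn f (Set.Icc 0 T))
    (hmid : ∀ a ∈ Set.Icc 0 T, ∀ b ∈ Set.Icc 0 T, f ((a + b)/2) ≤ (f a + f b)/2)
    {s : ℝ} (hs : s ∈ Set.Icc 0 T) :
    f s ≤ (1 - s/T) * f 0 + (s/T) * f T := by
  set g : ℝ → ℝ := fun t => f t - ((1 - t/T) * f 0 + (t/T) * f T) with hg
  have hgcont : ContinuousOn g (Set.Icc 0 T) := by
    apply hcont.sub
    fun_prop
  have hg0 : g 0 = 0 := by simp [hg]
  have hgT : g T = 0 := by
    simp only [hg]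
    field_simp
    ring
  have hgmid : ∀ a ∈ Set.Icc 0 T, ∀ b ∈ Set.Icc 0 T, g ((a + b)/2) ≤ (g a + g b)/2 := by
    intro a ha b hb
    have hf := hmid a ha b hb
    have hlin : (1 - ((a+b)/2)/T) * f 0 + (((a+b)/2)/T) * f T =
        (((1 - a/T) * f 0 + (a/T) * f T) + ((1 - b/T) * f 0 + (b/T) * f T))/2 := by
      field_simp
      ring
    simp only [hg]
    linarith
  clear_value g
  suffices h : g s ≤ 0 by
    simp only [hg] at h; linarith
  by_contra hpos
  push_neg at hpos
  obtain ⟨x₀, hx₀mem, hx₀max'⟩ :=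
    isCompact_Icc.exists_isMaxOn ⟨0, le_refl (0:ℝ), le_of_lt hT⟩ hgcont
  have hx₀max : ∀ y ∈ Set.Icc 0 T, g y ≤ g x₀ := fun y hy => hx₀max' hy
  set M := g x₀ with hM
  have hMpos : 0 < M := lt_of_lt_of_le hpos (hx₀max s hs)
  set A := Set.Icc 0 T ∩ g ⁻¹' {M} with hA
  have hAclosed : IsClosed A :=
    hgcont.preimage_isClosed_of_isClosed isClosed_Icc isClosed_singleton
  have hAcomp : IsCompact A :=
    isCompact_Icc.of_isClosed_subset hAclosed Set.inter_subset_left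
  obtain ⟨t₀, ht₀A, ht₀least⟩ := hAcomp.exists_isLeast ⟨x₀, hx₀mem, rfl⟩
  obtain ⟨ht₀mem, ht₀M⟩ := ht₀A
  have ht₀M : g t₀ = M := ht₀M
  clear_value M A
  have ht₀0 : t₀ ≠ 0 := fun h => by rw [h, hg0] at ht₀M; linarith
  have ht₀T : t₀ ≠ T := fun h => by rw [h, hgT] at ht₀M; linarith
  have ht₀pos : 0 < t₀ := lt_of_le_of_ne ht₀mem.1 (Ne.symm ht₀0)
  have ht₀lt : t₀ < T := lt_of_le_of_ne ht₀mem.2 ht₀T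
  set ε := min t₀ (T - t₀) with hε
  have hεpos : 0 < ε := lt_min ht₀pos (by linarith)
  have hεle1 : ε ≤ t₀ := min_le_left _ _
  have hεle2 : ε ≤ T - t₀ := min_le_right _ _
  clear_value ε
  have ha : t₀ - ε ∈ Set.Icc 0 T := ⟨by linarith, by linarith⟩
  have hb : t₀ + ε ∈ Set.Icc 0 T := ⟨by linarith, by linarith⟩
  have hmid' := hgmid _ ha _ hb
  have hmideq : ((t₀ - ε) + (t₀ + ε))/2 = t₀ := by ring
  rw [hmideq] at hmid'
  have hlta : g (t₀ - ε) < M := by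
    rcases lt_or_eq_of_le (hx₀max _ ha) with h | h
    · exact h
    · exfalso
      have : t₀ - ε ∈ A := by rw [hA]; exact ⟨ha, show g (t₀ - ε) ∈ ({M} : Set ℝ) from h⟩
      have := ht₀least this
      linarith
  have hltb : g (t₀ + ε) ≤ M := hx₀max _ hb
  rw [ht₀M] at hmid'
  have : M < M := lt_of_le_of_lt hmid' (by linarith [hlta, hltb])
  exact lt_irrefl _ this

section Aux2
variable {X : Type*} [MetricSpace X]

lemma ray_dist_continuousOn {γ δ : ℝ → X}
    (hγ : IsUnitSpeedOn γ (Set.Ici 0)) (hδ : IsUnitSpeedOn δ (Set.Ici 0)) {T : ℝ} :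
    ContinuousOn (fun t => dist (γ t) (δ t)) (Set.Icc 0 T) := by
  refine (LipschitzOnWith.of_dist_le' (K := 2) ?_).continuousOn
  intro a ha b hb
  have h1 : dist (γ a) (γ b) = |a - b| := hγ a ha.1 b hb.1
  have h2 : dist (δ a) (δ b) = |a - b| := hδ a ha.1 b hb.1
  have h3 := dist_dist_dist_le (γ a) (δ a) (γ b) (δ b)
  rw [h1, h2] at h3
  have : dist a b = |a - b| := Real.dist_eq a b
  calc dist (dist (γ a) (δ a)) (dist (γ b) (δ b)) ≤ |a - b| + |a - b| := h3
    _ = 2 * dist a b := by rw [this]; ring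

/-- Chord inequality for the distance between two unit-speed rays. -/
lemma ray_chord (hX : CAT0Space X) {γ δ : ℝ → X}
    (hγ : IsUnitSpeedOn γ (Set.Ici 0)) (hδ : IsUnitSpeedOn δ (Set.Ici 0))
    {T s : ℝ} (hT : 0 < T) (hs : s ∈ Set.Icc 0 T) :
    dist (γ s) (δ s) ≤ (1 - s/T) * dist (γ 0) (δ 0) + (s/T) * dist (γ T) (δ T) :=
  midpoint_convex_chord hT (ray_dist_continuousOn hγ hδ)
    (fun a ha b hb => ray_dist_midpoint hX hγ hδ ha.1 hb.1) hs

end Aux2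

/-- Let `X` be a cocompact proper CAT(0) space, `R ≥ 0`, `λ > 0` and
`K = (2R+1)/√(2 - 2 cos λ)`.  If `Σ` (here an index type `ι` of boundary points,
represented by unit-speed rays `α i` from `x`) is `(R,λ)`-wide with center `x` — i.e. for
each pair `i ≠ j` there is `y ∈ B_R(x)` and rays `α', β'` from `y` asymptotic to `α i`,
`α j` making Alexandrov angle ≥ λ at `y` — then there is a subset of the sphere
`S_K(x)` of the same cardinality as `Σ` that is `1`-separated. -/
theorem wide_set_gives_separated_sphere_subset {X : Type*} [MetricSpace X] [ProperSpace X]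
    (hX : CAT0Space X)
    (hcocompact : ∃ C : Set X, IsCompact C ∧ ∀ p : X, ∃ φ : X ≃ᵢ X, φ p ∈ C)
    (R lam : ℝ) (hR : 0 ≤ R) (hlam : 0 < lam)
    (K : ℝ) (hK : K = (2 * R + 1) / Real.sqrt (2 - 2 * Real.cos lam))
    {ι : Type*} (x : X) (α : ι → ℝ → X)
    (hray : ∀ i, α i 0 = x ∧ IsUnitSpeedOn (α i) (Set.Ici 0))
    (hwide : ∀ i j : ι, i ≠ j → ∃ y : X, dist y x ≤ R ∧
      ∃ α' β' : ℝ → X,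
        α' 0 = y ∧ IsUnitSpeedOn α' (Set.Ici 0) ∧
          (∃ C : ℝ, ∀ t ∈ Set.Ici (0:ℝ), dist (α' t) (α i t) ≤ C) ∧
        β' 0 = y ∧ IsUnitSpeedOn β' (Set.Ici 0) ∧
          (∃ C : ℝ, ∀ t ∈ Set.Ici (0:ℝ), dist (β' t) (α j t) ≤ C) ∧
        ∃ θ : ℝ, lam ≤ θ ∧
          Tendsto (fun t => compAngle y (α' t) (β' t)) (nhdsWithin 0 (Set.Ioi 0)) (nhds θ)) :
    ∃ g : ι → X, Function.Injective g ∧ (∀ i, dist (g i) x = K) ∧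
      ∀ i j : ι, i ≠ j → 1 ≤ dist (g i) (g j) := by
  have hKnn : 0 ≤ K := by
    rw [hK]; exact div_nonneg (by linarith) (Real.sqrt_nonneg _)
  have hdist : ∀ i, dist (α i K) x = K := by
    intro i
    obtain ⟨h0, hu⟩ := hray i
    rw [← h0, hu K (Set.mem_Ici.mpr hKnn) 0 (Set.mem_Ici.mpr le_rfl), sub_zero, abs_of_nonneg hKnn]
  have key : ∀ i j : ι, i ≠ j → 1 ≤ dist (α i K) (α j K) := by
    intro i j hij
    obtain ⟨y, hyx, α', β', hα'0, hα'u, ⟨C₁, hC₁⟩, hβ'0, hβ'u, ⟨C₂, hC₂⟩, θ, hltheta, hθ⟩ :=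
      hwide i j hij
    have hθπ : θ ≤ π :=
      le_of_tendsto hθ (Filter.Eventually.of_forall fun t => Real.arccos_le_pi _)
    have hlampi : lam ≤ π := hltheta.trans hθπ
    have hcos1 : Real.cos lam < 1 := by
      have := Real.strictAntiOn_cos (Set.mem_Icc.mpr ⟨le_rfl, Real.pi_pos.le⟩)
        (Set.mem_Icc.mpr ⟨hlam.le, hlampi⟩) hlam
      rwa [Real.cos_zero] at this
    have hc2 : Real.sqrt (2 - 2 * Real.cos lam) ^ 2 = 2 - 2 * Real.cos lam :=
      Real.sq_sqrt (by linarith)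
    have hcpos : 0 < Real.sqrt (2 - 2 * Real.cos lam) :=
      Real.sqrt_pos.mpr (by linarith)
    have hKpos : 0 < K := by rw [hK]; exact div_pos (by linarith) hcpos
    have hKc : K * Real.sqrt (2 - 2 * Real.cos lam) = 2 * R + 1 := by
      rw [hK]; field_simp
      exact div_self (ne_of_gt (Real.sqrt_pos.mpr (by linarith)))
    -- distances from y along the rays
    have hdy : ∀ t, 0 ≤ t → dist y (α' t) = t := by
      intro t ht
      rw [← hα'0, hα'u 0 (Set.mem_Ici.mpr le_rfl) t (Set.mem_Ici.mpr ht), zero_sub, abs_neg, abs_of_nonneg ht]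
    have hdy' : ∀ t, 0 ≤ t → dist y (β' t) = t := by
      intro t ht
      rw [← hβ'0, hβ'u 0 (Set.mem_Ici.mpr le_rfl) t (Set.mem_Ici.mpr ht), zero_sub, abs_neg, abs_of_nonneg ht]
    have hf0 : dist (α' 0) (β' 0) = 0 := by rw [hα'0, hβ'0, dist_self]
    have hfle : ∀ t, 0 ≤ t → dist (α' t) (β' t) ≤ 2 * t := by
      intro t ht
      calc dist (α' t) (β' t) ≤ dist (α' t) y + dist y (β' t) := dist_triangle _ _ _
        _ = t + t := by rw [dist_comm (α' t) y, hdy t ht, hdy' t ht]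
        _ = 2 * t := by ring
    -- limit of squared normalized distance
    have hcosangle : ∀ t, 0 < t →
        Real.cos (compAngle y (α' t) (β' t)) = 1 - dist (α' t) (β' t) ^ 2 / (2 * t ^ 2) := by
      intro t ht
      have h1 : dist y (α' t) = t := hdy t ht.le
      have h2 : dist y (β' t) = t := hdy' t ht.le
      have hsq : dist (α' t) (β' t) ^ 2 ≤ 4 * t ^ 2 := by
        nlinarith [hfle t ht.le, dist_nonneg (x := α' t) (y := β' t)]
      have hnn : (0:ℝ) ≤ dist (α' t) (β' t) ^ 2 := sq_nonneg _
      rw [compAngle, h1, h2]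
      rw [Real.cos_arccos]
      · field_simp; ring
      · rw [le_div_iff₀ (by positivity)]; nlinarith
      · rw [div_le_one (by positivity)]; nlinarith
    have h2 : Tendsto (fun t => Real.cos (compAngle y (α' t) (β' t)))
        (nhdsWithin 0 (Set.Ioi 0)) (nhds (Real.cos θ)) :=
      (Real.continuous_cos.tendsto θ).comp hθ
    have h3 : Tendsto (fun t => 2 - 2 * Real.cos (compAngle y (α' t) (β' t)))
        (nhdsWithin 0 (Set.Ioi 0)) (nhds (2 - 2 * Real.cos θ)) :=
      tendsto_const_nhds.sub (h2.const_mul 2)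
    have hlim : Tendsto (fun t => dist (α' t) (β' t) ^ 2 / t ^ 2)
        (nhdsWithin 0 (Set.Ioi 0)) (nhds (2 - 2 * Real.cos θ)) := by
      refine h3.congr' ?_
      filter_upwards [self_mem_nhdsWithin] with t ht
      have ht : (0:ℝ) < t := ht
      rw [hcosangle t ht]
      field_simp
      ring
    -- chord comparison up to K
    have hchordK : 2 - 2 * Real.cos θ ≤ dist (α' K) (β' K) ^ 2 / K ^ 2 := by
      refine le_of_tendsto hlim ?_
      have hev : ∀ᶠ t in nhdsWithin (0:ℝ) (Set.Ioi 0), t < K :=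
        (gt_mem_nhds hKpos).filter_mono nhdsWithin_le_nhds
      filter_upwards [self_mem_nhdsWithin, hev] with t htpos htK
      have htpos : (0:ℝ) < t := htpos
      have hchord := ray_chord hX hα'u hβ'u hKpos ⟨htpos.le, htK.le⟩
      rw [hf0] at hchord
      have h1' : dist (α' t) (β' t) * K ≤ t * dist (α' K) (β' K) := by
        have : dist (α' t) (β' t) ≤ t / K * dist (α' K) (β' K) := by linarith
        calc dist (α' t) (β' t) * K ≤ (t / K * dist (α' K) (β' K)) * K :=
              mul_le_mul_of_nonneg_right this hKpos.le
          _ = t * dist (α' K) (β' K) := by field_simp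
      rw [div_le_div_iff₀ (by positivity) (by positivity)]
      nlinarith [h1', mul_nonneg (dist_nonneg (x := α' t) (y := β' t)) hKpos.le,
        mul_nonneg htpos.le (dist_nonneg (x := α' K) (y := β' K))]
    have hcoscos : Real.cos θ ≤ Real.cos lam :=
      Real.cos_le_cos_of_nonneg_of_le_pi hlam.le hθπ hltheta
    have hfK : 2 * R + 1 ≤ dist (α' K) (β' K) := by
      have h1 : (2 * R + 1) ^ 2 ≤ dist (α' K) (β' K) ^ 2 := by
        have hx1 : 2 - 2 * Real.cos lam ≤ dist (α' K) (β' K) ^ 2 / K ^ 2 := by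
          linarith
        have h2' : (2 - 2 * Real.cos lam) * K ^ 2 ≤ dist (α' K) (β' K) ^ 2 :=
          (le_div_iff₀ (by positivity)).mp hx1
        calc (2 * R + 1) ^ 2 = (K * Real.sqrt (2 - 2 * Real.cos lam)) ^ 2 := by rw [hKc]
          _ = (2 - 2 * Real.cos lam) * K ^ 2 := by rw [mul_pow, hc2]; ring
          _ ≤ dist (α' K) (β' K) ^ 2 := h2'
      nlinarith [dist_nonneg (x := α' K) (y := β' K), hR]
    -- asymptotic rays stay close
    have hasym : ∀ (γ' δ : ℝ → X) (C : ℝ), IsUnitSpeedOn γ' (Set.Ici 0) →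
        IsUnitSpeedOn δ (Set.Ici 0) → (∀ t ∈ Set.Ici (0:ℝ), dist (γ' t) (δ t) ≤ C) →
        dist (γ' K) (δ K) ≤ dist (γ' 0) (δ 0) := by
      intro γ' δ C huγ huδ hC
      have hbound : ∀ T, K ≤ T →
          dist (γ' K) (δ K) ≤ (1 - K/T) * dist (γ' 0) (δ 0) + (K/T) * C := by
        intro T hT'
        have hTpos : 0 < T := lt_of_lt_of_le hKpos hT'
        have hchord := ray_chord hX huγ huδ hTpos ⟨hKnn, hT'⟩
        have hTC : dist (γ' T) (δ T) ≤ C := hC T hTpos.le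
        have : (K/T) * dist (γ' T) (δ T) ≤ (K/T) * C :=
          mul_le_mul_of_nonneg_left hTC (by positivity)
        linarith
      have hlim2 : Tendsto (fun T => (1 - K/T) * dist (γ' 0) (δ 0) + (K/T) * C)
          atTop (nhds (dist (γ' 0) (δ 0))) := by
        have h1 : Tendsto (fun T : ℝ => K/T) atTop (nhds 0) :=
          tendsto_const_nhds.div_atTop tendsto_id
        have h2' : Tendsto (fun T : ℝ => (1 - K/T) * dist (γ' 0) (δ 0) + (K/T) * C)
            atTop (nhds ((1 - 0) * dist (γ' 0) (δ 0) + 0 * C)) :=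
          (((tendsto_const_nhds (x := (1:ℝ))).sub h1).mul tendsto_const_nhds).add
            (h1.mul tendsto_const_nhds)
        simpa using h2'
      exact ge_of_tendsto hlim2 (eventually_atTop.2 ⟨K, fun T hT' => hbound T hT'⟩)
    have hA : dist (α' K) (α i K) ≤ R := by
      have h' := hasym α' (α i) C₁ hα'u (hray i).2 hC₁
      rw [hα'0, (hray i).1] at h'
      exact h'.trans hyx
    have hB : dist (β' K) (α j K) ≤ R := by
      have h' := hasym β' (α j) C₂ hβ'u (hray j).2 hC₂
      rw [hβ'0, (hray j).1] at h'
      exact h'.trans hyx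
    have tri : dist (α' K) (β' K) ≤
        dist (α' K) (α i K) + dist (α i K) (α j K) + dist (α j K) (β' K) :=
      dist_triangle4 _ _ _ _
    have hcomm : dist (α j K) (β' K) = dist (β' K) (α j K) := dist_comm _ _
    linarith
  refine ⟨fun i => α i K, ?_, hdist, key⟩
  intro i j h
  by_contra hne
  have hsep := key i j hne
  have h' : α i K = α j K := h
  rw [h', dist_self] at hsep
  linarith
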